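/- Let N ≥ 2 workers run GADMM with penalty ρ > 0, generating primal iterates θ_n^k and dual iterates λ_n^k, and suppose the unaugmented Lagrangian L_0({θ_n},{λ_n}) = Σ_{n=1}^N f_n(θ_n) + Σ_{n=1}^{N−1} ⟨λ_n, θ_n − θ_{n+1}⟩ has a saddle point ((θ*,…,θ*), (λ_1*,…,λ_{N−1}*)). Then the objective optimality gap converges to zero: lim_{k→∞} Σ_{n=1}^N f_n(θ_n^k) = Σ_{n=1}^N f_n(θ*). -/

import Mathlib

open Finset Filter
open scoped RealInnerProductSpace Topology

/-- The unaugmented Lagrangian `L_0({θ_n}, {λ_n})`. -/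
noncomputable def L0 {E : Type*} [NormedAddCommGroup E] [InnerProductSpace ℝ E]
    (N : ℕ) (f : ℕ → E → ℝ) (th la : ℕ → E) : ℝ :=
  ∑ n ∈ Finset.Icc 1 N, f n (th n)
    + ∑ n ∈ Finset.Icc 1 (N-1), ⟪la n, th n - th (n+1)⟫


set_option maxHeartbeats 1000000
set_option maxRecDepth 4000

section Helpers
variable {E : Type*} [NormedAddCommGroup E] [InnerProductSpace ℝ E]

lemma norm_sub_smul_sq (a b : E) (t : ℝ) :
    ‖a - t • b‖^2 = ‖a‖^2 - 2*t*⟪a,b⟫ + t^2*‖b‖^2 := by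
  rw [norm_sub_sq_real, real_inner_smul_right, norm_smul]
  simp only [Real.norm_eq_abs, mul_pow, sq_abs]
  ring


lemma key_slope (f : E → ℝ) (hf : ConvexOn ℝ Set.univ f)
    (u v c d y : E) (α β : ℝ) (hα : 0 ≤ α) (hβ : 0 ≤ β)
    (h : ∀ x, f y + ⟪u, c - y⟫ + ⟪v, y - d⟫ + α/2*‖c-y‖^2 + β/2*‖y-d‖^2
       ≤ f x + ⟪u, c - x⟫ + ⟪v, x - d⟫ + α/2*‖c-x‖^2 + β/2*‖x-d‖^2) (x : E) :
    f y - f x ≤ ⟪v - u + α•(y-c) + β•(y-d), x - y⟫ := by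
  set G : ℝ := ⟪v - u + α•(y-c) + β•(y-d), x - y⟫ with hG
  set C : ℝ := (α+β)/2*‖x-y‖^2 with hC
  have hCnn : 0 ≤ C := by positivity
  have main : ∀ t : ℝ, 0 < t → t ≤ 1 → f y - f x ≤ G + t*C := by
    intro t ht ht1
    set z : E := y + t•(x-y) with hz
    have hxt : z = (1-t)•y + t•x := by rw [hz]; rw [smul_sub, sub_smul, one_smul]; abel
    have hcv : f z ≤ (1-t)*(f y) + t*(f x) := by
      rw [hxt]
      exact hf.2 (Set.mem_univ y) (Set.mem_univ x) (by linarith) (le_of_lt ht) (by ring)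
    have h2 := h z
    have step1 : t*(f y - f x) ≤ (⟪u, c - z⟫ - ⟪u,c-y⟫) + (⟪v, z - d⟫ - ⟪v,y-d⟫)
        + α/2*(‖c-z‖^2-‖c-y‖^2) + β/2*(‖z-d‖^2-‖y-d‖^2) := by nlinarith [h2, hcv]
    have e1 : c - z = (c - y) - t•(x-y) := by rw [hz]; abel
    have e2 : z - d = (y - d) - (-t)•(x-y) := by rw [hz, neg_smul]; abel
    have q1 : ‖c - z‖^2 = ‖c-y‖^2 - 2*t*⟪c-y, x-y⟫ + t^2*‖x-y‖^2 := by
      rw [e1, norm_sub_smul_sq]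
    have q2 : ‖z - d‖^2 = ‖y-d‖^2 + 2*t*⟪y-d, x-y⟫ + t^2*‖x-y‖^2 := by
      rw [e2, norm_sub_smul_sq]; ring
    have i1 : ⟪u, c - z⟫ = ⟪u, c - y⟫ - t*⟪u, x-y⟫ := by
      rw [e1, inner_sub_right, real_inner_smul_right]
    have i2 : ⟪v, z - d⟫ = ⟪v, y - d⟫ + t*⟪v, x-y⟫ := by
      rw [e2, inner_sub_right, real_inner_smul_right]; ring
    have hGexp : G = ⟪v, x-y⟫ - ⟪u, x-y⟫ + α*⟪y-c, x-y⟫ + β*⟪y-d, x-y⟫ := by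
      rw [hG]; simp [inner_add_left, inner_sub_left, real_inner_smul_left]
    have hyc : ⟪y-c, x-y⟫ = -⟪c-y, x-y⟫ := by
      rw [show y-c = -(c-y) by abel, inner_neg_left]
    have step2 : (⟪u, c - z⟫ - ⟪u,c-y⟫) + (⟪v, z - d⟫ - ⟪v,y-d⟫)
        + α/2*(‖c-z‖^2-‖c-y‖^2) + β/2*(‖z-d‖^2-‖y-d‖^2) = t*(G + t*C) := by
      rw [i1, i2, q1, q2, hGexp, hyc, hC]; ring
    rw [step2] at step1
    have := (mul_le_mul_iff_right₀ ht).mp step1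
    linarith
  have hfin : ∀ ε : ℝ, 0 < ε → f y - f x ≤ G + ε := by
    intro ε hε
    rcases le_or_gt C ε with hc | hc
    · have := main 1 one_pos le_rfl; linarith
    · have htpos : 0 < ε / C := div_pos hε (by linarith)
      have h3 := main (ε/C) htpos (by rw [div_le_one (by linarith)]; linarith)
      rw [div_mul_cancel₀ _ (by linarith : C ≠ 0)] at h3
      linarith
  linarith [le_of_forall_pos_le_add hfin]

lemma per_edge (ρ : ℝ) (hρ : 0 < ρ) (lamk ls A B C S r : E)
    (hr : r = A - B ∨ r = B - A) :
    ⟪ls - (lamk + ρ•r), r⟫ - ρ*⟪B - C, A - S⟫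
      = (1/(2*ρ))*(‖lamk - ls‖^2 - ‖(lamk + ρ•r) - ls‖^2)
        + ρ*((1/2)*‖C-S‖^2 - (1/2)*‖B-S‖^2 - (1/2)*‖A-C‖^2) := by
  have h1 : ‖(lamk + ρ•r) - ls‖^2 = ‖lamk - ls‖^2 + 2*ρ*⟪lamk - ls, r⟫ + ρ^2*‖r‖^2 := by
    rw [show (lamk + ρ•r) - ls = (lamk - ls) - (-ρ)•r by rw [neg_smul]; abel]
    rw [norm_sub_smul_sq]; ring
  have h2 : ⟪ls - (lamk + ρ•r), r⟫ = -⟪lamk - ls, r⟫ - ρ*‖r‖^2 := by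
    rw [show ls - (lamk + ρ•r) = -(lamk - ls) - ρ•r by abel]
    rw [inner_sub_left, inner_neg_left, real_inner_smul_left, real_inner_self_eq_norm_sq]
  have h3 : ‖r‖^2 = ‖A - B‖^2 := by
    rcases hr with h | h <;> rw [h]
    rw [show B - A = -(A-B) by abel, norm_neg]
  have h4 : ‖A-B‖^2 = ‖A-C‖^2 - 2*⟪A-C, B-C⟫ + ‖B-C‖^2 := by
    rw [show A-B = (A-C) - (B-C) by abel, norm_sub_sq_real]
  have h5 : ‖C-S‖^2 = ‖B-S‖^2 - 2*⟪B-S, B-C⟫ + ‖B-C‖^2 := by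
    rw [show C-S = (B-S) - (B-C) by abel, norm_sub_sq_real]
  have h6 : ⟪B - C, A - S⟫ = ⟪A-C, B-C⟫ + ⟪B-S, B-C⟫ - ‖B-C‖^2 := by
    simp only [← real_inner_self_eq_norm_sq, inner_sub_left, inner_sub_right]
    rw [real_inner_comm B A, real_inner_comm C A, real_inner_comm S B,
      real_inner_comm S C, real_inner_comm C B]
    ring
  rw [h2, h1, h3, h4, h5, h6]
  field_simp
  ring


lemma abel_sum (N : ℕ) (hN : 1 ≤ N) (L z : ℕ → E) (hL0 : L 0 = 0) :
    ∑ n ∈ Icc 1 N, ⟪L n - L (n-1), z n⟫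
      = (∑ l ∈ Icc 1 (N-1), ⟪L l, z l - z (l+1)⟫) + ⟪L N, z N⟫ := by
  induction N, hN using Nat.le_induction with
  | base => simp [hL0]
  | succ n hn ih =>
    rw [Finset.sum_Icc_succ_top (by omega : (1:ℕ) ≤ n+1), ih]
    have hn' : n - 1 + 1 = n := by omega
    rw [show n+1-1 = n from rfl]
    have hsplit := Finset.sum_Icc_succ_top (by omega : (1:ℕ) ≤ n-1+1)
      (f := fun l => (⟪L l, z l - z (l+1)⟫ : ℝ))
    rw [hn'] at hsplit
    rw [hsplit, inner_sub_left, inner_sub_right]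
    ring

end Helpers

lemma parity_sum (A : ℕ → ℕ → ℝ) (N : ℕ) (hNeven : Even N) :
    ∑ n ∈ Icc 1 N, (if Odd n then (A n (n+1) + if 1 < n then A n (n-1) else 0) else 0)
      = ∑ l ∈ Icc 1 (N-1), (if Odd l then A l (l+1) else A (l+1) l) := by
  obtain ⟨m, rfl⟩ := hNeven
  rw [show m + m = 2*m by ring]
  induction m with
  | zero => simp
  | succ m ih =>
    set F : ℕ → ℝ := fun n => if Odd n then (A n (n+1) + if 1 < n then A n (n-1) else 0) else 0 with hF
    set G : ℕ → ℝ := fun l => if Odd l then A l (l+1) else A (l+1) l with hG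
    rcases Nat.eq_zero_or_pos m with rfl | hm
    · have h2 : Icc (1:ℕ) 2 = {1, 2} := rfl
      have h1 : Icc (1:ℕ) 1 = {1} := rfl
      norm_num [h2, h1, hF, hG, Nat.odd_iff]
    · have o1 : Odd (2*m+1) := ⟨m, by ring⟩
      have o2 : ¬ Odd (2*m+1+1) := by rw [Nat.odd_iff]; omega
      have o3 : ¬ Odd (2*m) := by rw [Nat.odd_iff]; omega
      have e4 : 2*m-1+1 = 2*m := by omega
      rw [show 2*(m+1) = 2*m+1+1 by ring, show 2*m+1+1-1 = (2*m)+1 from rfl]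
      rw [Finset.sum_Icc_succ_top (by omega : (1:ℕ) ≤ 2*m+1+1) (f := F)]
      rw [Finset.sum_Icc_succ_top (by omega : (1:ℕ) ≤ 2*m+1) (f := F)]
      rw [ih]
      rw [Finset.sum_Icc_succ_top (by omega : (1:ℕ) ≤ 2*m+1) (f := G)]
      have hsplit := Finset.sum_Icc_succ_top (by omega : (1:ℕ) ≤ 2*m-1+1) (f := G)
      rw [e4] at hsplit
      rw [hsplit]
      have hF1 : F (2*m+1) = A (2*m+1) (2*m+1+1) + A (2*m+1) (2*m) := by
        rw [hF]; simp only [if_pos o1, if_pos (by omega : 1 < 2*m+1)]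
        rw [show 2*m+1-1 = 2*m from rfl]
      have hF2 : F (2*m+1+1) = 0 := by rw [hF]; simp only [if_neg o2]
      have hG1 : G (2*m) = A (2*m+1) (2*m) := by rw [hG]; simp only [if_neg o3]
      have hG2 : G (2*m+1) = A (2*m+1) (2*m+1+1) := by rw [hG]; simp only [if_pos o1]
      rw [hF1, hF2, hG1, hG2]
      ring

section Helpers2
variable {E : Type*} [NormedAddCommGroup E] [InnerProductSpace ℝ E]

lemma sq_norm_tendsto (g : ℕ → E) (h : Tendsto (fun k => ‖g k‖^2) atTop (𝓝 0)) :
    Tendsto g atTop (𝓝 0) := by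
  rw [tendsto_zero_iff_norm_tendsto_zero]
  have h2 := h.sqrt
  rw [Real.sqrt_zero] at h2
  convert h2 using 2 with k
  rw [Real.sqrt_sq (norm_nonneg _)]

end Helpers2

/-- head of edge l (the odd endpoint) -/
def eHd (l : ℕ) : ℕ := if Odd l then l else l+1
/-- tail of edge l (the even endpoint) -/
def eTl (l : ℕ) : ℕ := if Odd l then l+1 else l

/-- truncation: `g n` for `1 ≤ n ≤ N-1`, else 0 -/
def trunc {E : Type*} [Zero E] (N : ℕ) (g : ℕ → E) (n : ℕ) : E :=
  if 1 ≤ n ∧ n ≤ N-1 then g n else 0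

/-- the extra head term -/
def EHt {E : Type*} [AddCommGroup E] (θ : ℕ → ℕ → E) (k n : ℕ) : E :=
  if Odd n then ((θ (k+1) (n+1) - θ k (n+1)) + (if 1 < n then θ (k+1) (n-1) - θ k (n-1) else 0)) else 0

theorem gadmm_objective_tendsto_optimal
    {E : Type*} [NormedAddCommGroup E] [InnerProductSpace ℝ E] [FiniteDimensional ℝ E]
    (N : ℕ) (hN : 2 ≤ N) (hNeven : Even N)
    (f : ℕ → E → ℝ) (hconv : ∀ n, ConvexOn ℝ Set.univ (f n))
    (ρ : ℝ) (hρ : 0 < ρ)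
    (θ lam : ℕ → ℕ → E)
    -- (a) head updates: interior odd workers 1 < n ≤ N
    (hHead : ∀ k n, Odd n → 1 < n → n ≤ N → ∀ x : E,
      f n (θ (k+1) n) + ⟪lam k (n-1), θ k (n-1) - θ (k+1) n⟫
        + ⟪lam k n, θ (k+1) n - θ k (n+1)⟫
        + ρ/2 * ‖θ k (n-1) - θ (k+1) n‖^2 + ρ/2 * ‖θ (k+1) n - θ k (n+1)‖^2
      ≤ f n x + ⟪lam k (n-1), θ k (n-1) - x⟫ + ⟪lam k n, x - θ k (n+1)⟫
        + ρ/2 * ‖θ k (n-1) - x‖^2 + ρ/2 * ‖x - θ k (n+1)‖^2)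
    -- (a) head update for the first worker n = 1
    (hHead1 : ∀ k, ∀ x : E,
      f 1 (θ (k+1) 1) + ⟪lam k 1, θ (k+1) 1 - θ k 2⟫ + ρ/2 * ‖θ (k+1) 1 - θ k 2‖^2
      ≤ f 1 x + ⟪lam k 1, x - θ k 2⟫ + ρ/2 * ‖x - θ k 2‖^2)
    -- (b) tail updates: even workers 0 < n < N
    (hTail : ∀ k n, Even n → 0 < n → n < N → ∀ x : E,
      f n (θ (k+1) n) + ⟪lam k (n-1), θ (k+1) (n-1) - θ (k+1) n⟫
        + ⟪lam k n, θ (k+1) n - θ (k+1) (n+1)⟫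
        + ρ/2 * ‖θ (k+1) (n-1) - θ (k+1) n‖^2 + ρ/2 * ‖θ (k+1) n - θ (k+1) (n+1)‖^2
      ≤ f n x + ⟪lam k (n-1), θ (k+1) (n-1) - x⟫ + ⟪lam k n, x - θ (k+1) (n+1)⟫
        + ρ/2 * ‖θ (k+1) (n-1) - x‖^2 + ρ/2 * ‖x - θ (k+1) (n+1)‖^2)
    -- (b) tail update for the last worker n = N
    (hTailN : ∀ k, ∀ x : E,
      f N (θ (k+1) N) + ⟪lam k (N-1), θ (k+1) (N-1) - θ (k+1) N⟫
        + ρ/2 * ‖θ (k+1) (N-1) - θ (k+1) N‖^2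
      ≤ f N x + ⟪lam k (N-1), θ (k+1) (N-1) - x⟫ + ρ/2 * ‖θ (k+1) (N-1) - x‖^2)
    -- (c) dual updates
    (hDual : ∀ k n, 1 ≤ n → n ≤ N - 1 →
      lam (k+1) n = lam k n + ρ • (θ (k+1) n - θ (k+1) (n+1)))
    (θstar : E) (lamstar : ℕ → E)
    (hsaddle : ∀ (th la : ℕ → E),
      L0 N f (fun _ => θstar) la ≤ L0 N f (fun _ => θstar) lamstar ∧
      L0 N f (fun _ => θstar) lamstar ≤ L0 N f th lamstar) :
    Tendsto (fun k => ∑ n ∈ Icc 1 N, f n (θ k n)) atTop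
      (𝓝 (∑ n ∈ Icc 1 N, f n θstar)) := by

  -- abbreviations
  set pstar : ℝ := ∑ n ∈ Icc 1 N, f n θstar with hpstar
  set P : ℕ → ℝ := fun k => ∑ n ∈ Icc 1 N, f n (θ k n) with hP
  -- saddle consequence
  have hsad : ∀ j : ℕ, pstar ≤ P j + ∑ l ∈ Icc 1 (N-1), ⟪lamstar l, θ j l - θ j (l+1)⟫ := by
    intro j
    have h := (hsaddle (θ j) lamstar).2
    simp only [L0, sub_self, inner_zero_right, Finset.sum_const_zero, add_zero] at h
    rw [hpstar, hP]
    exact h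
  -- per-worker slope inequality
  have Sineq : ∀ k n, 1 ≤ n → n ≤ N → ∀ x : E,
      f n (θ (k+1) n) - f n x
        ≤ ⟪trunc N (lam (k+1)) n - trunc N (lam (k+1)) (n-1) + ρ • EHt θ k n, x - θ (k+1) n⟫ := by
    intro k n hn1 hnN x
    have hN1 : 1 ≤ N - 1 := by omega
    rcases Nat.even_or_odd n with he | ho
    · -- n even : tail worker
      have hno : ¬ Odd n := Nat.not_odd_iff_even.mpr he
      have hn2 : 2 ≤ n := by
        obtain ⟨j, hj⟩ := he; omega
      have hEH : EHt θ k n = 0 := by rw [EHt, if_neg hno]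
      rcases eq_or_lt_of_le hnN with heq | hlt
      · -- n = N
        subst heq
        have hk := key_slope (f n) (hconv n) (lam k (n-1)) 0 (θ (k+1) (n-1)) 0 (θ (k+1) n)
          ρ 0 (le_of_lt hρ) le_rfl (fun x' => by
            simpa only [inner_zero_left, zero_div, zero_mul, add_zero] using hTailN k x') x
        have hveq : (0:E) - lam k (n-1) + ρ•(θ (k+1) n - θ (k+1) (n-1)) + (0:ℝ)•(θ (k+1) n - 0)
            = trunc n (lam (k+1)) n - trunc n (lam (k+1)) (n-1) + ρ • EHt θ k n := by
          rw [hEH, trunc, trunc, if_neg (by omega : ¬(1 ≤ n ∧ n ≤ n-1)),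
            if_pos (⟨hN1, le_rfl⟩ : 1 ≤ n-1 ∧ n-1 ≤ n-1),
            hDual k (n-1) hN1 le_rfl, show n-1+1 = n by omega]
          module
        rw [← hveq]
        exact hk
      · -- n even interior
        have hk := key_slope (f n) (hconv n) (lam k (n-1)) (lam k n) (θ (k+1) (n-1))
          (θ (k+1) (n+1)) (θ (k+1) n) ρ ρ (le_of_lt hρ) (le_of_lt hρ)
          (fun x' => hTail k n he (by omega) hlt x') x
        have hveq : lam k n - lam k (n-1) + ρ•(θ (k+1) n - θ (k+1) (n-1))
              + ρ•(θ (k+1) n - θ (k+1) (n+1))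
            = trunc N (lam (k+1)) n - trunc N (lam (k+1)) (n-1) + ρ • EHt θ k n := by
          rw [hEH, trunc, trunc, if_pos (by omega : 1 ≤ n ∧ n ≤ N-1),
            if_pos (by omega : 1 ≤ n-1 ∧ n-1 ≤ N-1),
            hDual k n (by omega) (by omega), hDual k (n-1) (by omega) (by omega),
            show n-1+1 = n by omega]
          module
        rw [← hveq]
        exact hk
    · -- n odd : head worker
      have hnN' : n ≤ N - 1 := by
        obtain ⟨j, hj⟩ := ho; obtain ⟨m, hm⟩ := hNeven; omega
      rcases eq_or_lt_of_le hn1 with heq | hlt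
      · -- n = 1
        rw [← heq]
        have hk := key_slope (f 1) (hconv 1) 0 (lam k 1) 0 (θ k 2) (θ (k+1) 1)
          0 ρ le_rfl (le_of_lt hρ) (fun x' => by
            simpa only [inner_zero_left, zero_div, zero_mul, add_zero, zero_add] using hHead1 k x') x
        have hveq : lam k 1 - 0 + (0:ℝ)•(θ (k+1) 1 - 0) + ρ•(θ (k+1) 1 - θ k 2)
            = trunc N (lam (k+1)) 1 - trunc N (lam (k+1)) 0 + ρ • EHt θ k 1 := by
          rw [EHt, if_pos odd_one, if_neg (by omega : ¬(1:ℕ) < 1), trunc, trunc,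
            if_pos (⟨le_rfl, hN1⟩ : 1 ≤ 1 ∧ 1 ≤ N-1), if_neg (by omega : ¬(1 ≤ 0 ∧ 0 ≤ N-1)),
            hDual k 1 le_rfl hN1]
          module
        rw [show (1:ℕ)-1 = 0 from rfl, ← hveq]
        exact hk
      · -- n odd interior
        have hk := key_slope (f n) (hconv n) (lam k (n-1)) (lam k n) (θ k (n-1))
          (θ k (n+1)) (θ (k+1) n) ρ ρ (le_of_lt hρ) (le_of_lt hρ)
          (fun x' => hHead k n ho hlt hnN x') x
        have hveq : lam k n - lam k (n-1) + ρ•(θ (k+1) n - θ k (n-1)) + ρ•(θ (k+1) n - θ k (n+1))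
            = trunc N (lam (k+1)) n - trunc N (lam (k+1)) (n-1) + ρ • EHt θ k n := by
          rw [EHt, if_pos ho, if_pos hlt, trunc, trunc,
            if_pos (by omega : 1 ≤ n ∧ n ≤ N-1), if_pos (by omega : 1 ≤ n-1 ∧ n-1 ≤ N-1),
            hDual k n (by omega) (by omega), hDual k (n-1) (by omega) (by omega),
            show n-1+1 = n by omega]
          module
        rw [← hveq]
        exact hk
  -- summed upper bound
  have SumIneq : ∀ k, P (k+1) - pstar
      ≤ -(∑ l ∈ Icc 1 (N-1), ⟪lam (k+1) l, θ (k+1) l - θ (k+1) (l+1)⟫)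
        - ρ * ∑ l ∈ Icc 1 (N-1), ⟪θ (k+1) (eTl l) - θ k (eTl l), θ (k+1) (eHd l) - θstar⟫ := by
    intro k
    have h1 : P (k+1) - pstar
        ≤ ∑ n ∈ Icc 1 N, ⟪trunc N (lam (k+1)) n - trunc N (lam (k+1)) (n-1) + ρ • EHt θ k n,
            θstar - θ (k+1) n⟫ := by
      rw [hP, hpstar, ← Finset.sum_sub_distrib]
      exact Finset.sum_le_sum (fun n hn => by
        obtain ⟨a, b⟩ := Finset.mem_Icc.mp hn
        exact Sineq k n a b θstar)
    have h2 : ∀ n : ℕ, ⟪trunc N (lam (k+1)) n - trunc N (lam (k+1)) (n-1) + ρ • EHt θ k n,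
          θstar - θ (k+1) n⟫
        = ⟪trunc N (lam (k+1)) n - trunc N (lam (k+1)) (n-1), θstar - θ (k+1) n⟫
          + ρ * ⟪EHt θ k n, θstar - θ (k+1) n⟫ := by
      intro n; rw [inner_add_left, real_inner_smul_left]
    rw [Finset.sum_congr rfl (fun n _ => h2 n), Finset.sum_add_distrib] at h1
    have h3 : ∑ n ∈ Icc 1 N, ⟪trunc N (lam (k+1)) n - trunc N (lam (k+1)) (n-1), θstar - θ (k+1) n⟫
        = -(∑ l ∈ Icc 1 (N-1), ⟪lam (k+1) l, θ (k+1) l - θ (k+1) (l+1)⟫) := by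
      rw [abel_sum N (by omega) (trunc N (lam (k+1))) (fun n => θstar - θ (k+1) n)
        (by rw [trunc, if_neg (by omega : ¬(1 ≤ 0 ∧ 0 ≤ N-1))])]
      rw [show trunc N (lam (k+1)) N = 0 from by
          rw [trunc, if_neg (by omega : ¬(1 ≤ N ∧ N ≤ N-1))],
        inner_zero_left, add_zero]
      rw [← Finset.sum_neg_distrib]
      apply Finset.sum_congr rfl
      intro l hl
      obtain ⟨hl1, hl2⟩ := Finset.mem_Icc.mp hl
      rw [trunc, if_pos (⟨hl1, hl2⟩ : 1 ≤ l ∧ l ≤ N-1)]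
      rw [show (θstar - θ (k+1) l) - (θstar - θ (k+1) (l+1)) = -(θ (k+1) l - θ (k+1) (l+1))
        from by abel, inner_neg_right]
    have h5 : ∑ n ∈ Icc 1 N, ⟪EHt θ k n, θstar - θ (k+1) n⟫
        = ∑ n ∈ Icc 1 N, (if Odd n then
            (⟪θ (k+1) (n+1) - θ k (n+1), θstar - θ (k+1) n⟫
              + if 1 < n then ⟪θ (k+1) (n-1) - θ k (n-1), θstar - θ (k+1) n⟫ else 0)
            else 0) := by
      apply Finset.sum_congr rfl
      intro n _
      by_cases ho : Odd n
      · by_cases h1n : 1 < n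
        · simp only [EHt, if_pos ho, if_pos h1n, inner_add_left]
        · simp only [EHt, if_pos ho, if_neg h1n, add_zero, inner_add_left, inner_zero_left]
      · simp only [EHt, if_neg ho, inner_zero_left]
    have h6 : ∀ l : ℕ, (if Odd l then
            (fun a b => (⟪θ (k+1) b - θ k b, θstar - θ (k+1) a⟫ : ℝ)) l (l+1)
          else (fun a b => (⟪θ (k+1) b - θ k b, θstar - θ (k+1) a⟫ : ℝ)) (l+1) l)
        = -⟪θ (k+1) (eTl l) - θ k (eTl l), θ (k+1) (eHd l) - θstar⟫ := by
      intro l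
      by_cases ho : Odd l
      · simp only [if_pos ho, eHd, eTl]
        rw [show θstar - θ (k+1) l = -(θ (k+1) l - θstar) from by abel, inner_neg_right]
      · simp only [if_neg ho, eHd, eTl]
        rw [show θstar - θ (k+1) (l+1) = -(θ (k+1) (l+1) - θstar) from by abel, inner_neg_right]
    have h4 : ∑ n ∈ Icc 1 N, ρ * ⟪EHt θ k n, θstar - θ (k+1) n⟫
        = -(ρ * ∑ l ∈ Icc 1 (N-1), ⟪θ (k+1) (eTl l) - θ k (eTl l), θ (k+1) (eHd l) - θstar⟫) := by
      rw [← Finset.mul_sum, h5,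
        parity_sum (fun a b => (⟪θ (k+1) b - θ k b, θstar - θ (k+1) a⟫ : ℝ)) N hNeven,
        Finset.sum_congr rfl (fun l _ => h6 l), Finset.sum_neg_distrib, mul_neg]
    rw [h3, h4] at h1
    linarith
  -- Lyapunov
  set V : ℕ → ℝ := fun k => ∑ l ∈ Icc 1 (N-1),
      ((1/(2*ρ))*‖lam k l - lamstar l‖^2 + (ρ/2)*‖θ k (eTl l) - θstar‖^2) with hV
  set D : ℕ → ℝ := fun k => ∑ l ∈ Icc 1 (N-1), ‖θ (k+1) (eHd l) - θ k (eTl l)‖^2 with hD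
  have hVdec : ∀ k, (ρ/2) * D k ≤ V k - V (k+1) := by
    intro k
    have step5 : 0 ≤ ∑ l ∈ Icc 1 (N-1),
        ((⟪lamstar l - lam (k+1) l, θ (k+1) l - θ (k+1) (l+1)⟫ : ℝ)
          - ρ * ⟪θ (k+1) (eTl l) - θ k (eTl l), θ (k+1) (eHd l) - θstar⟫) := by
      have hs := hsad (k+1)
      have hu := SumIneq k
      have hsplit : ∑ l ∈ Icc 1 (N-1),
          ((⟪lamstar l - lam (k+1) l, θ (k+1) l - θ (k+1) (l+1)⟫ : ℝ)
            - ρ * ⟪θ (k+1) (eTl l) - θ k (eTl l), θ (k+1) (eHd l) - θstar⟫)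
          = ∑ l ∈ Icc 1 (N-1), ⟪lamstar l, θ (k+1) l - θ (k+1) (l+1)⟫
            + (-(∑ l ∈ Icc 1 (N-1), ⟪lam (k+1) l, θ (k+1) l - θ (k+1) (l+1)⟫)
            - ρ * ∑ l ∈ Icc 1 (N-1), ⟪θ (k+1) (eTl l) - θ k (eTl l), θ (k+1) (eHd l) - θstar⟫) := by
        rw [Finset.mul_sum, ← Finset.sum_neg_distrib, ← Finset.sum_sub_distrib,
          ← Finset.sum_add_distrib]
        apply Finset.sum_congr rfl
        intro l _
        rw [inner_sub_left]
        ring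
      rw [hsplit]
      linarith
    have hpt : ∀ l ∈ Icc 1 (N-1),
        ((⟪lamstar l - lam (k+1) l, θ (k+1) l - θ (k+1) (l+1)⟫ : ℝ)
          - ρ * ⟪θ (k+1) (eTl l) - θ k (eTl l), θ (k+1) (eHd l) - θstar⟫)
        = (1/(2*ρ))*(‖lam k l - lamstar l‖^2 - ‖lam (k+1) l - lamstar l‖^2)
          + ρ*((1/2)*‖θ k (eTl l) - θstar‖^2 - (1/2)*‖θ (k+1) (eTl l) - θstar‖^2
              - (1/2)*‖θ (k+1) (eHd l) - θ k (eTl l)‖^2) := by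
      intro l hl
      obtain ⟨hl1, hl2⟩ := Finset.mem_Icc.mp hl
      have hdu := hDual k l hl1 hl2
      have hr : (θ (k+1) l - θ (k+1) (l+1)) = θ (k+1) (eHd l) - θ (k+1) (eTl l)
          ∨ (θ (k+1) l - θ (k+1) (l+1)) = θ (k+1) (eTl l) - θ (k+1) (eHd l) := by
        by_cases ho : Odd l
        · left; simp only [eHd, eTl, if_pos ho]
        · right; simp only [eHd, eTl, if_neg ho]
      have hpe := per_edge ρ hρ (lam k l) (lamstar l) (θ (k+1) (eHd l)) (θ (k+1) (eTl l))
        (θ k (eTl l)) θstar (θ (k+1) l - θ (k+1) (l+1)) hr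
      rw [← hdu] at hpe
      exact hpe
    have halg : V k - V (k+1) - (ρ/2) * D k
        = ∑ l ∈ Icc 1 (N-1),
          ((1/(2*ρ))*(‖lam k l - lamstar l‖^2 - ‖lam (k+1) l - lamstar l‖^2)
            + ρ*((1/2)*‖θ k (eTl l) - θstar‖^2 - (1/2)*‖θ (k+1) (eTl l) - θstar‖^2
              - (1/2)*‖θ (k+1) (eHd l) - θ k (eTl l)‖^2)) := by
      simp only [hV, hD]
      rw [Finset.mul_sum, ← Finset.sum_sub_distrib, ← Finset.sum_sub_distrib]
      apply Finset.sum_congr rfl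
      intro l _
      ring
    have hstep := step5
    rw [Finset.sum_congr rfl hpt] at hstep
    linarith
  have hDnn : ∀ k, 0 ≤ D k := fun k => Finset.sum_nonneg fun l _ => by positivity
  have hVnn : ∀ k, 0 ≤ V k := fun k => Finset.sum_nonneg fun l _ => by positivity
  have hVbd : ∀ k, V k ≤ V 0 := by
    intro k
    induction k with
    | zero => exact le_refl _
    | succ k ih =>
      have h1 := hVdec k
      have h2 := mul_nonneg (le_of_lt (half_pos hρ)) (hDnn k)
      linarith
  -- D tends to zero
  have hDto : Tendsto D atTop (𝓝 0) := by
    have key : ∀ K, ∑ k ∈ range K, (ρ/2) * D k ≤ V 0 := by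
      intro K
      have h1 : ∑ k ∈ range K, ((ρ/2) * D k) ≤ ∑ k ∈ range K, (V k - V (k+1)) :=
        Finset.sum_le_sum (fun k _ => hVdec k)
      rw [Finset.sum_range_sub'] at h1
      linarith [hVnn K]
    have hsum : Summable (fun k => (ρ/2) * D k) :=
      summable_of_sum_range_le (fun k => mul_nonneg (le_of_lt (half_pos hρ)) (hDnn k)) key
    have h0 := hsum.tendsto_atTop_zero.const_mul (2/ρ)
    rw [mul_zero] at h0
    have h2 : (fun k => (2/ρ) * ((ρ/2) * D k)) = D := by
      funext k; field_simp
    rwa [h2] at h0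
  -- each edge residual tends to zero
  have hGto : ∀ l, 1 ≤ l → l ≤ N-1 →
      Tendsto (fun k => θ (k+1) (eHd l) - θ k (eTl l)) atTop (𝓝 0) := by
    intro l hl1 hl2
    apply sq_norm_tendsto
    apply tendsto_of_tendsto_of_tendsto_of_le_of_le (tendsto_const_nhds (x := (0:ℝ))) hDto
    · intro k; positivity
    · intro k
      rw [hD]
      exact Finset.single_le_sum (f := fun l => ‖θ (k+1) (eHd l) - θ k (eTl l)‖^2)
        (fun i _ => by positivity) (Finset.mem_Icc.mpr ⟨hl1, hl2⟩)
  -- tail increments tend to zero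
  have hEto : ∀ m, Even m → 2 ≤ m → m ≤ N →
      Tendsto (fun k => θ (k+2) m - θ (k+1) m) atTop (𝓝 0) := by
    intro m hme hm2 hmN
    have hmo : ¬ Odd m := Nat.not_odd_iff_even.mpr hme
    have hEH : ∀ j, EHt θ j m = 0 := fun j => by rw [EHt, if_neg hmo]
    have hm1o : Odd (m-1) := by
      obtain ⟨j, hj⟩ := hme
      exact ⟨j-1, by omega⟩
    have ha : Tendsto (fun k => θ (k+2) (m-1) - θ (k+1) m) atTop (𝓝 0) := by
      have h0 := (hGto (m-1) (by omega) (by omega)).comp (tendsto_add_atTop_nat 1)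
      simp only [Function.comp_def, eHd, eTl, if_pos hm1o, show m-1+1 = m from by omega] at h0
      exact h0
    have hmono : ∀ k : ℕ, (0:ℝ) ≤
        ⟪(trunc N (lam (k+2)) m - trunc N (lam (k+2)) (m-1))
          - (trunc N (lam (k+1)) m - trunc N (lam (k+1)) (m-1)),
          θ (k+1) m - θ (k+2) m⟫ := by
      intro k
      have h1 := Sineq k m (by omega) hmN (θ (k+2) m)
      have h2 := Sineq (k+1) m (by omega) hmN (θ (k+1) m)
      simp only [show k+1+1 = k+2 from rfl] at h2
      rw [hEH, smul_zero, add_zero] at h1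
      rw [hEH, smul_zero, add_zero] at h2
      have h3 : (⟪trunc N (lam (k+1)) m - trunc N (lam (k+1)) (m-1),
            θ (k+2) m - θ (k+1) m⟫ : ℝ)
          = -⟪trunc N (lam (k+1)) m - trunc N (lam (k+1)) (m-1),
              θ (k+1) m - θ (k+2) m⟫ := by
        rw [show θ (k+2) m - θ (k+1) m = -(θ (k+1) m - θ (k+2) m) from by abel, inner_neg_right]
      rw [inner_sub_left]
      rw [h3] at h1
      linarith
    rcases eq_or_lt_of_le hmN with heqN | hltN
    · -- m = N
      have hkey : ∀ k, ‖θ (k+2) m - θ (k+1) m‖ ≤ ‖θ (k+2) (m-1) - θ (k+1) m‖ := by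
        intro k
        have hvec : (trunc N (lam (k+2)) m - trunc N (lam (k+2)) (m-1))
              - (trunc N (lam (k+1)) m - trunc N (lam (k+1)) (m-1))
            = ρ • ((θ (k+2) m - θ (k+1) m) - (θ (k+2) (m-1) - θ (k+1) m)) := by
          have hd2 := hDual (k+1) (m-1) (by omega) (by omega)
          simp only [show k+1+1 = k+2 from rfl, show m-1+1 = m from by omega] at hd2
          rw [trunc, trunc, trunc, trunc,
            if_neg (by omega : ¬(1 ≤ m ∧ m ≤ N-1)), if_neg (by omega : ¬(1 ≤ m ∧ m ≤ N-1)),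
            if_pos (by omega : 1 ≤ m-1 ∧ m-1 ≤ N-1), if_pos (by omega : 1 ≤ m-1 ∧ m-1 ≤ N-1),
            hd2]
          module
        have hm' := hmono k
        rw [hvec, real_inner_smul_left] at hm'
        have hm'' : (0:ℝ) ≤ ⟪(θ (k+2) m - θ (k+1) m) - (θ (k+2) (m-1) - θ (k+1) m),
            θ (k+1) m - θ (k+2) m⟫ := nonneg_of_mul_nonneg_right hm' hρ
        rw [inner_sub_left,
          show θ (k+1) m - θ (k+2) m = -(θ (k+2) m - θ (k+1) m) from by abel,
          inner_neg_right, inner_neg_right, real_inner_self_eq_norm_sq] at hm''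
        have hin := real_inner_le_norm (θ (k+2) (m-1) - θ (k+1) m) (θ (k+2) m - θ (k+1) m)
        rcases eq_or_lt_of_le (norm_nonneg (θ (k+2) m - θ (k+1) m)) with h0 | h0
        · rw [← h0]; exact norm_nonneg _
        · nlinarith
      apply squeeze_zero_norm hkey
      have := ha.norm
      simpa using this
    · -- m < N interior
      have hb : Tendsto (fun k => θ (k+2) (m+1) - θ (k+1) m) atTop (𝓝 0) := by
        have h0 := (hGto m (by omega) (by omega)).comp (tendsto_add_atTop_nat 1)
        simp only [Function.comp_def, eHd, eTl, if_neg hmo] at h0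
        exact h0
      have hkey : ∀ k, ‖θ (k+2) m - θ (k+1) m‖
          ≤ (1/2)*‖(θ (k+2) (m-1) - θ (k+1) m) + (θ (k+2) (m+1) - θ (k+1) m)‖ := by
        intro k
        have hvec : (trunc N (lam (k+2)) m - trunc N (lam (k+2)) (m-1))
              - (trunc N (lam (k+1)) m - trunc N (lam (k+1)) (m-1))
            = ρ • ((2:ℝ) • (θ (k+2) m - θ (k+1) m)
                - ((θ (k+2) (m-1) - θ (k+1) m) + (θ (k+2) (m+1) - θ (k+1) m))) := by
          have hd1 := hDual (k+1) m (by omega) (by omega)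
          have hd2 := hDual (k+1) (m-1) (by omega) (by omega)
          simp only [show k+1+1 = k+2 from rfl, show m-1+1 = m from by omega] at hd1 hd2
          rw [trunc, trunc, trunc, trunc,
            if_pos (by omega : 1 ≤ m ∧ m ≤ N-1), if_pos (by omega : 1 ≤ m ∧ m ≤ N-1),
            if_pos (by omega : 1 ≤ m-1 ∧ m-1 ≤ N-1), if_pos (by omega : 1 ≤ m-1 ∧ m-1 ≤ N-1),
            hd1, hd2]
          module
        have hm' := hmono k
        rw [hvec, real_inner_smul_left] at hm'
        have hm'' : (0:ℝ) ≤ ⟪(2:ℝ) • (θ (k+2) m - θ (k+1) m)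
            - ((θ (k+2) (m-1) - θ (k+1) m) + (θ (k+2) (m+1) - θ (k+1) m)),
            θ (k+1) m - θ (k+2) m⟫ := nonneg_of_mul_nonneg_right hm' hρ
        rw [inner_sub_left,
          show θ (k+1) m - θ (k+2) m = -(θ (k+2) m - θ (k+1) m) from by abel,
          inner_neg_right, inner_neg_right, real_inner_smul_left,
          real_inner_self_eq_norm_sq] at hm''
        have hin := real_inner_le_norm
          ((θ (k+2) (m-1) - θ (k+1) m) + (θ (k+2) (m+1) - θ (k+1) m))
          (θ (k+2) m - θ (k+1) m)
        rcases eq_or_lt_of_le (norm_nonneg (θ (k+2) m - θ (k+1) m)) with h0 | h0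
        · rw [← h0]; positivity
        · nlinarith
      apply squeeze_zero_norm hkey
      have := ((ha.add hb).norm).const_mul (1/2)
      simpa using this
  -- primal residuals tend to zero
  have hRto : ∀ l, 1 ≤ l → l ≤ N-1 →
      Tendsto (fun k => θ (k+2) l - θ (k+2) (l+1)) atTop (𝓝 0) := by
    intro l hl1 hl2
    by_cases ho : Odd l
    · have ha : Tendsto (fun k => θ (k+2) l - θ (k+1) (l+1)) atTop (𝓝 0) := by
        have h0 := (hGto l hl1 hl2).comp (tendsto_add_atTop_nat 1)
        simp only [Function.comp_def, eHd, eTl, if_pos ho] at h0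
        exact h0
      have hb := hEto (l+1) (Odd.add_one ho) (by omega) (by omega)
      have h0 := ha.sub hb
      rw [sub_zero] at h0
      exact h0.congr (fun k => by abel)
    · have hle : Even l := Nat.not_odd_iff_even.mp ho
      have hl2' : 2 ≤ l := by obtain ⟨j, hj⟩ := hle; omega
      have ha := hEto l hle hl2' (by omega)
      have hb : Tendsto (fun k => θ (k+2) (l+1) - θ (k+1) l) atTop (𝓝 0) := by
        have h0 := (hGto l hl1 hl2).comp (tendsto_add_atTop_nat 1)
        simp only [Function.comp_def, eHd, eTl, if_neg ho] at h0
        exact h0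
      have h0 := ha.sub hb
      rw [sub_zero] at h0
      exact h0.congr (fun k => by abel)
  -- boundedness
  have hLamBd : ∀ l, 1 ≤ l → l ≤ N-1 → ∀ k, ‖lam k l‖ ≤ ‖lamstar l‖ + Real.sqrt (2*ρ*(V 0)) := by
    intro l hl1 hl2 k
    have hterm : (1/(2*ρ))*‖lam k l - lamstar l‖^2 ≤ V k := by
      rw [hV]
      calc (1/(2*ρ))*‖lam k l - lamstar l‖^2
          ≤ (1/(2*ρ))*‖lam k l - lamstar l‖^2 + (ρ/2)*‖θ k (eTl l) - θstar‖^2 :=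
            le_add_of_nonneg_right (by positivity)
        _ ≤ _ := Finset.single_le_sum
            (f := fun l => (1/(2*ρ))*‖lam k l - lamstar l‖^2 + (ρ/2)*‖θ k (eTl l) - θstar‖^2)
            (fun i _ => by positivity) (Finset.mem_Icc.mpr ⟨hl1, hl2⟩)
    have hsq : ‖lam k l - lamstar l‖^2 ≤ 2*ρ*(V 0) := by
      have := hVbd k
      have h2ρ : 0 < 2*ρ := by linarith
      rw [div_mul_eq_mul_div, one_mul, div_le_iff₀ h2ρ] at hterm
      nlinarith
    have hle : ‖lam k l - lamstar l‖ ≤ Real.sqrt (2*ρ*(V 0)) :=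
      Real.le_sqrt_of_sq_le hsq
    calc ‖lam k l‖ = ‖lamstar l + (lam k l - lamstar l)‖ := by rw [add_sub_cancel]
      _ ≤ ‖lamstar l‖ + ‖lam k l - lamstar l‖ := norm_add_le _ _
      _ ≤ ‖lamstar l‖ + Real.sqrt (2*ρ*(V 0)) := by linarith
  have hThBd : ∀ l, 1 ≤ l → l ≤ N-1 → ∀ k, ‖θ k (eTl l) - θstar‖ ≤ Real.sqrt (2*(V 0)/ρ) := by
    intro l hl1 hl2 k
    have hterm : (ρ/2)*‖θ k (eTl l) - θstar‖^2 ≤ V k := by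
      rw [hV]
      calc (ρ/2)*‖θ k (eTl l) - θstar‖^2
          ≤ (1/(2*ρ))*‖lam k l - lamstar l‖^2 + (ρ/2)*‖θ k (eTl l) - θstar‖^2 :=
            le_add_of_nonneg_left (by positivity)
        _ ≤ _ := Finset.single_le_sum
            (f := fun l => (1/(2*ρ))*‖lam k l - lamstar l‖^2 + (ρ/2)*‖θ k (eTl l) - θstar‖^2)
            (fun i _ => by positivity) (Finset.mem_Icc.mpr ⟨hl1, hl2⟩)
    apply Real.le_sqrt_of_sq_le
    rw [le_div_iff₀ hρ]
    have := hVbd k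
    nlinarith
  -- final squeeze
  set Lo : ℕ → ℝ := fun k => ∑ l ∈ Icc 1 (N-1), ⟪lamstar l, θ (k+2) l - θ (k+2) (l+1)⟫ with hLo
  set U : ℕ → ℝ := fun k =>
    -(∑ l ∈ Icc 1 (N-1), ⟪lam (k+2) l, θ (k+2) l - θ (k+2) (l+1)⟫)
      - ρ * ∑ l ∈ Icc 1 (N-1), ⟪θ (k+2) (eTl l) - θ (k+1) (eTl l), θ (k+2) (eHd l) - θstar⟫
    with hU
  have upper : ∀ k, P (k+2) - pstar ≤ U k := by
    intro k
    have h0 := SumIneq (k+1)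
    simp only [show k+1+1 = k+2 from rfl] at h0
    rw [hU]
    exact h0
  have lower : ∀ k, pstar - P (k+2) ≤ Lo k := by
    intro k
    have h0 := hsad (k+2)
    rw [hLo]
    linarith
  have hLoto : Tendsto Lo atTop (𝓝 0) := by
    rw [hLo]
    have h0 : Tendsto (fun k => ∑ l ∈ Icc 1 (N-1),
        (⟪lamstar l, θ (k+2) l - θ (k+2) (l+1)⟫ : ℝ)) atTop (𝓝 (∑ l ∈ Icc 1 (N-1), (0:ℝ))) := by
      apply tendsto_finset_sum
      intro l hl
      obtain ⟨hl1, hl2⟩ := Finset.mem_Icc.mp hl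
      have := Filter.Tendsto.inner (𝕜 := ℝ) (tendsto_const_nhds (x := lamstar l) (f := atTop))
        (hRto l hl1 hl2)
      simpa using this
    simpa using h0
  have hUto : Tendsto U atTop (𝓝 0) := by
    have hS1 : Tendsto (fun k => ∑ l ∈ Icc 1 (N-1),
        (⟪lam (k+2) l, θ (k+2) l - θ (k+2) (l+1)⟫ : ℝ)) atTop (𝓝 (∑ l ∈ Icc 1 (N-1), (0:ℝ))) := by
      apply tendsto_finset_sum
      intro l hl
      obtain ⟨hl1, hl2⟩ := Finset.mem_Icc.mp hl
      apply squeeze_zero_norm (a := fun k =>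
        (‖lamstar l‖ + Real.sqrt (2*ρ*(V 0))) * ‖θ (k+2) l - θ (k+2) (l+1)‖)
      · intro k
        calc ‖(⟪lam (k+2) l, θ (k+2) l - θ (k+2) (l+1)⟫ : ℝ)‖
            ≤ ‖lam (k+2) l‖ * ‖θ (k+2) l - θ (k+2) (l+1)‖ := norm_inner_le_norm _ _
          _ ≤ (‖lamstar l‖ + Real.sqrt (2*ρ*(V 0))) * ‖θ (k+2) l - θ (k+2) (l+1)‖ :=
              mul_le_mul_of_nonneg_right (hLamBd l hl1 hl2 (k+2)) (norm_nonneg _)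
      · have := ((hRto l hl1 hl2).norm).const_mul (‖lamstar l‖ + Real.sqrt (2*ρ*(V 0)))
        simpa using this
    have hS2 : Tendsto (fun k => ∑ l ∈ Icc 1 (N-1),
        (⟪θ (k+2) (eTl l) - θ (k+1) (eTl l), θ (k+2) (eHd l) - θstar⟫ : ℝ)) atTop
        (𝓝 (∑ l ∈ Icc 1 (N-1), (0:ℝ))) := by
      apply tendsto_finset_sum
      intro l hl
      obtain ⟨hl1, hl2⟩ := Finset.mem_Icc.mp hl
      have hTlEven : Even (eTl l) := by
        by_cases ho : Odd l
        · simp only [eTl, if_pos ho]; exact Odd.add_one ho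
        · simp only [eTl, if_neg ho]; exact Nat.not_odd_iff_even.mp ho
      have hTl2 : 2 ≤ eTl l := by
        by_cases ho : Odd l
        · simp only [eTl, if_pos ho]; omega
        · simp only [eTl, if_neg ho]
          obtain ⟨j, hj⟩ := Nat.not_odd_iff_even.mp ho; omega
      have hTlN : eTl l ≤ N := by
        by_cases ho : Odd l
        · simp only [eTl, if_pos ho]; omega
        · simp only [eTl, if_neg ho]; omega
      have hEl := hEto (eTl l) hTlEven hTl2 hTlN
      have hGl1 : Tendsto (fun k => θ (k+2) (eHd l) - θ (k+1) (eTl l)) atTop (𝓝 0) :=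
        (hGto l hl1 hl2).comp (tendsto_add_atTop_nat 1)
      apply squeeze_zero_norm (a := fun k =>
        ‖θ (k+2) (eTl l) - θ (k+1) (eTl l)‖
          * (‖θ (k+2) (eHd l) - θ (k+1) (eTl l)‖ + Real.sqrt (2*(V 0)/ρ)))
      · intro k
        calc ‖(⟪θ (k+2) (eTl l) - θ (k+1) (eTl l), θ (k+2) (eHd l) - θstar⟫ : ℝ)‖
            ≤ ‖θ (k+2) (eTl l) - θ (k+1) (eTl l)‖ * ‖θ (k+2) (eHd l) - θstar‖ :=
              norm_inner_le_norm _ _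
          _ ≤ ‖θ (k+2) (eTl l) - θ (k+1) (eTl l)‖
              * (‖θ (k+2) (eHd l) - θ (k+1) (eTl l)‖ + Real.sqrt (2*(V 0)/ρ)) := by
              apply mul_le_mul_of_nonneg_left _ (norm_nonneg _)
              calc ‖θ (k+2) (eHd l) - θstar‖
                  = ‖(θ (k+2) (eHd l) - θ (k+1) (eTl l)) + (θ (k+1) (eTl l) - θstar)‖ := by
                    rw [show (θ (k+2) (eHd l) - θ (k+1) (eTl l)) + (θ (k+1) (eTl l) - θstar)
                      = θ (k+2) (eHd l) - θstar from by abel]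
                _ ≤ ‖θ (k+2) (eHd l) - θ (k+1) (eTl l)‖ + ‖θ (k+1) (eTl l) - θstar‖ :=
                    norm_add_le _ _
                _ ≤ ‖θ (k+2) (eHd l) - θ (k+1) (eTl l)‖ + Real.sqrt (2*(V 0)/ρ) := by
                    linarith [hThBd l hl1 hl2 (k+1)]
      · have := (hEl.norm).mul ((hGl1.norm).add (tendsto_const_nhds (x := Real.sqrt (2*(V 0)/ρ))))
        simpa using this
    have h0 := (hS1.neg).sub (hS2.const_mul ρ)
    simp only [Finset.sum_const_zero, neg_zero, mul_zero, sub_zero] at h0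
    rw [hU]
    exact h0
  have hsq : Tendsto (fun k => P (k+2)) atTop (𝓝 pstar) := by
    have hg : Tendsto (fun k => pstar - Lo k) atTop (𝓝 pstar) := by
      have := (tendsto_const_nhds (x := pstar) (f := atTop)).sub hLoto
      simpa using this
    have hh : Tendsto (fun k => pstar + U k) atTop (𝓝 pstar) := by
      have := (tendsto_const_nhds (x := pstar) (f := atTop)).add hUto
      simpa using this
    apply tendsto_of_tendsto_of_tendsto_of_le_of_le hg hh
    · intro k; have := lower k; simp only []; linarith
    · intro k; have := upper k; simp only []; linarith
  exact (tendsto_add_atTop_iff_nat 2).mp hsq
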